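/- For n odd, each Y-equivalence class of arithmetic frieze patterns of width n contains at most two elements: at most two arithmetic frieze patterns of width n share a given second row. -/

import Mathlib

/-- A closed Y-frieze pattern of width `n`: a staggered array `b i j` (row `k`
consists of entries `b i (i+k+2)`) satisfying the Y-diamond rule, with zeroth
row and `(n+1)`-th row of `0`s, a row of `-1`s below, nonzero intermediate
rows, and normalized to `0` outside the pattern. -/
structure ClosedYFrieze (n : ℕ) where
  b : ℤ → ℤ → ℚ
  diamond : ∀ i j : ℤ, 3 ≤ j - i → j - i ≤ (n : ℤ) + 3 →
    b i j * b (i + 1) (j + 1) = (1 + b (i + 1) j) * (1 + b i (j + 1))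
  topZero : ∀ i : ℤ, b i (i + 2) = 0
  botZero : ∀ i : ℤ, b i (i + (n : ℤ) + 3) = 0
  negRow : ∀ i : ℤ, b i (i + (n : ℤ) + 4) = -1
  rowsNonzero : ∀ k : ℕ, 1 ≤ k → k ≤ n → ∃ i : ℤ, b i (i + (k : ℤ) + 2) ≠ 0
  outside : ∀ i j : ℤ, j - i ≤ 1 ∨ (n : ℤ) + 5 ≤ j - i → b i j = 0

/-- All entries of the nonzero rows are positive rationals. -/
def ClosedYFrieze.Positive {n : ℕ} (P : ClosedYFrieze n) : Prop :=
  ∀ (i : ℤ) (k : ℕ), 1 ≤ k → k ≤ n → 0 < P.b i (i + (k : ℤ) + 2)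

/-- All entries of the nonzero rows are positive integers. -/
def ClosedYFrieze.Arithmetic {n : ℕ} (P : ClosedYFrieze n) : Prop :=
  ∀ (i : ℤ) (k : ℕ), 1 ≤ k → k ≤ n → ∃ m : ℕ, 0 < m ∧ P.b i (i + (k : ℤ) + 2) = (m : ℚ)

/-- A closed (Coxeter) frieze pattern of width `n`: a staggered array `a i j`
(row `k` consists of entries `a i (i+k+1)`) satisfying the diamond rule
`a_{i,j} a_{i+1,j+1} = 1 + a_{i,j+1} a_{i+1,j}`, bounded above and below by
rows of `1`s, and normalized to `0` outside. -/
structure ClosedFrieze (n : ℕ) where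
  a : ℤ → ℤ → ℚ
  diamond : ∀ i j : ℤ, 2 ≤ j - i → j - i ≤ (n : ℤ) + 1 →
    a i j * a (i + 1) (j + 1) = 1 + a i (j + 1) * a (i + 1) j
  topOne : ∀ i : ℤ, a i (i + 1) = 1
  botOne : ∀ i : ℤ, a i (i + (n : ℤ) + 2) = 1
  outside : ∀ i j : ℤ, j - i ≤ 0 ∨ (n : ℤ) + 3 ≤ j - i → a i j = 0

/-- All entries of the interior rows are positive integers. -/
def ClosedFrieze.Arithmetic {n : ℕ} (A : ClosedFrieze n) : Prop :=
  ∀ (i : ℤ) (k : ℕ), 1 ≤ k → k ≤ n → ∃ m : ℕ, 0 < m ∧ A.a i (i + (k : ℤ) + 1) = (m : ℚ)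

namespace ClosedFrieze

variable {n : ℕ}

/-- every in-pattern entry is ≥ 1 -/
lemma one_le (A : ClosedFrieze n) (hA : A.Arithmetic) (i j : ℤ)
    (h1 : 1 ≤ j - i) (h2 : j - i ≤ (n : ℤ) + 2) : 1 ≤ A.a i j := by
  rcases eq_or_lt_of_le h1 with h | h
  · have : j = i + 1 := by omega
    rw [this, A.topOne]
  rcases eq_or_lt_of_le h2 with h' | h'
  · have : j = i + (n : ℤ) + 2 := by omega
    rw [this, A.botOne]
  · set k : ℕ := (j - i - 1).toNat with hk
    have hk1 : (k : ℤ) = j - i - 1 := by omega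
    have hk2 : 1 ≤ k := by omega
    have hk3 : k ≤ n := by omega
    obtain ⟨m, hm, he⟩ := hA i k hk2 hk3
    have hj : j = i + (k : ℤ) + 1 := by omega
    rw [hj, he]
    exact_mod_cast hm

lemma pos (A : ClosedFrieze n) (hA : A.Arithmetic) (i j : ℤ)
    (h1 : 1 ≤ j - i) (h2 : j - i ≤ (n : ℤ) + 2) : 0 < A.a i j :=
  lt_of_lt_of_le one_pos (A.one_le hA i j h1 h2)

/-- extended diamond rule, also valid on the boundary rows -/
lemma dia (A : ClosedFrieze n) (i j : ℤ)
    (h1 : 1 ≤ j - i) (h2 : j - i ≤ (n : ℤ) + 2) :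
    A.a i j * A.a (i + 1) (j + 1) = 1 + A.a i (j + 1) * A.a (i + 1) j := by
  rcases eq_or_lt_of_le h1 with h | h
  · have hj : j = i + 1 := by omega
    subst hj
    rw [A.topOne i, show i + 1 + 1 = (i+1) + 1 by ring, A.topOne (i+1),
      A.outside (i+1) (i+1) (by left; omega)]
    ring
  rcases eq_or_lt_of_le h2 with h' | h'
  · have hj : j = i + (n : ℤ) + 2 := by omega
    subst hj
    rw [A.botOne i, A.outside i (i + (n:ℤ) + 2 + 1) (by right; omega),
      show i + (n:ℤ) + 2 + 1 = (i+1) + (n:ℤ) + 2 by ring, A.botOne (i+1)]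
    ring
  · exact A.diamond i j (by omega) (by omega)

/-- product of two adjacent quiddity entries -/
lemma quidProd (A : ClosedFrieze n) (i : ℤ) :
    A.a i (i + 2) * A.a (i + 1) (i + 3) = 1 + A.a i (i + 3) := by
  have := A.dia i (i + 2) (by omega) (by omega)
  have t : A.a (i+1) (i+2) = 1 := by
    have h := A.topOne (i+1); rwa [show (i:ℤ)+1+1 = i+2 by ring] at h
  rw [show i + 2 + 1 = i + 3 by ring, t] at this
  linarith [this]

end ClosedFrieze

namespace ClosedFrieze
variable {n : ℕ}

/-- the linear recursion along diagonals -/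
lemma recur (A : ClosedFrieze n) (hA : A.Arithmetic) :
    ∀ k : ℕ, (k : ℤ) ≤ n → ∀ i j : ℤ, j - i = (k : ℤ) + 1 →
      A.a i (j + 1) = A.a (j - 1) (j + 1) * A.a i j - A.a i (j - 1) := by
  intro k
  induction k with
  | zero =>
    intro _ i j hij
    have hi : i = j - 1 := by omega
    subst hi
    have t1 : A.a (j - 1) j = 1 := by
      have := A.topOne (j - 1); rwa [show j - 1 + 1 = j by ring] at this
    have t0 : A.a (j - 1) (j - 1) = 0 := A.outside _ _ (by left; omega)
    rw [t1, t0]; ring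
  | succ k ih =>
    intro hk i j hij
    push_cast at hij
    have IH := ih (by omega) (i + 1) j (by omega)
    have E1 := A.dia i j (by omega) (by omega)
    have E2 := A.dia i (j - 1) (by omega) (by omega)
    rw [show j - 1 + 1 = j by ring] at E2
    have hne : A.a (i + 1) j ≠ 0 :=
      ne_of_gt (A.pos hA (i + 1) j (by omega) (by omega))
    apply mul_right_cancel₀ hne
    linear_combination (-1) * E1 + E2 + A.a i j * IH

/-- every arithmetic closed frieze has a `1` in its quiddity row -/
lemma ear (A : ClosedFrieze n) (hA : A.Arithmetic) (hn : 1 ≤ n) :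
    ∃ i : ℤ, A.a i (i + 2) = 1 := by
  by_contra hno
  push_neg at hno
  have hx : ∀ i : ℤ, 2 ≤ A.a i (i + 2) := by
    intro i
    obtain ⟨m, hm, he⟩ := hA i 1 le_rfl hn
    push_cast at he
    rw [show i + (1:ℤ) + 1 = i + 2 by ring] at he
    have : m ≠ 1 := by
      rintro rfl; exact hno i (by rw [he]; norm_num)
    rw [he]
    exact_mod_cast by omega
  have key : ∀ k : ℕ, (k : ℤ) ≤ n →
      A.a 0 ((k : ℤ) + 1) + 1 ≤ A.a 0 ((k : ℤ) + 2) ∧ 2 ≤ A.a 0 ((k : ℤ) + 2) := by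
    intro k
    induction k with
    | zero =>
      intro _
      have t1 : A.a 0 ((0:ℕ) + 1 : ℤ) = 1 := by
        have := A.topOne 0; norm_num at this ⊢; exact this
      have t2 : 2 ≤ A.a 0 ((0:ℕ) + 2 : ℤ) := by
        have := hx 0; norm_num at this ⊢; exact this
      norm_num at t1 t2 ⊢
      constructor
      · rw [t1]; linarith
      · exact t2
    | succ k ih =>
      intro hk
      push_cast at hk ⊢
      rw [show (k:ℤ)+1+1 = (k:ℤ)+2 by ring, show (k:ℤ)+1+2 = (k:ℤ)+3 by ring]
      obtain ⟨ih1, ih2⟩ := ih (by omega)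
      have R := A.recur hA (k + 1) (by push_cast; omega) 0 ((k : ℤ) + 2) (by push_cast; omega)
      rw [show (k:ℤ) + 2 + 1 = (k:ℤ) + 3 by ring, show (k:ℤ) + 2 - 1 = (k:ℤ) + 1 by ring] at R
      have hq : 2 ≤ A.a ((k:ℤ) + 1) ((k:ℤ) + 3) := by
        have := hx ((k:ℤ) + 1)
        rwa [show (k:ℤ) + 1 + 2 = (k:ℤ) + 3 by ring] at this
      have hp : 0 < A.a 0 ((k:ℤ) + 2) := A.pos hA 0 _ (by omega) (by omega)
      constructor
      · nlinarith [hq, hp, ih1, R]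
      · nlinarith [hq, hp, ih1, ih2, R]
  obtain ⟨h1, h2⟩ := key n le_rfl
  have hb : A.a 0 ((n : ℤ) + 2) = 1 := by
    have := A.botOne 0; rwa [show (0:ℤ) + (n:ℤ) + 2 = (n:ℤ) + 2 by ring] at this
  rw [hb] at h2
  linarith

end ClosedFrieze

namespace ClosedFrieze
variable {n : ℕ}

lemma prodE (A B : ClosedFrieze n) (hs : ∀ i : ℤ, A.a i (i + 3) = B.a i (i + 3)) (i : ℤ) :
    A.a i (i + 2) * A.a (i + 1) (i + 3) = B.a i (i + 2) * B.a (i + 1) (i + 3) := by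
  rw [A.quidProd i, B.quidProd i, hs i]

lemma ratio_step_up (A B : ClosedFrieze n) (hs : ∀ i : ℤ, A.a i (i + 3) = B.a i (i + 3))
    (i : ℤ) (U V : ℚ) (hU : U ≠ 0) (hBi : B.a i (i + 2) ≠ 0)
    (h : B.a i (i + 2) * U = A.a i (i + 2) * V) :
    B.a (i + 1) (i + 3) * V = A.a (i + 1) (i + 3) * U := by
  have E := prodE A B hs i
  apply mul_right_cancel₀ (mul_ne_zero hBi hU)
  linear_combination (-(U * V)) * E - (A.a (i + 1) (i + 3) * U) * h

lemma ratio_step_down (A B : ClosedFrieze n) (hs : ∀ i : ℤ, A.a i (i + 3) = B.a i (i + 3))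
    (i : ℤ) (U V : ℚ) (hV : V ≠ 0) (hBi : B.a (i + 1) (i + 3) ≠ 0)
    (h : B.a (i + 1) (i + 3) * V = A.a (i + 1) (i + 3) * U) :
    B.a i (i + 2) * U = A.a i (i + 2) * V := by
  have E := prodE A B hs i
  apply mul_right_cancel₀ (mul_ne_zero hBi hV)
  linear_combination (-(U * V)) * E - (A.a i (i + 2) * V) * h

lemma ratio (A B : ClosedFrieze n) (hA : A.Arithmetic) (hB : B.Arithmetic)
    (hs : ∀ i : ℤ, A.a i (i + 3) = B.a i (i + 3)) :
    ∀ i : ℤ, (Even i → B.a i (i + 2) * A.a 0 2 = A.a i (i + 2) * B.a 0 2) ∧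
      (Odd i → B.a i (i + 2) * B.a 0 2 = A.a i (i + 2) * A.a 0 2) := by
  have hA0 : (0:ℚ) < A.a 0 2 := A.pos hA 0 2 (by omega) (by omega)
  have hB0 : (0:ℚ) < B.a 0 2 := B.pos hB 0 2 (by omega) (by omega)
  have hBq : ∀ i : ℤ, (0:ℚ) < B.a i (i + 2) := fun i => B.pos hB i (i + 2) (by omega) (by omega)
  have hBq' : ∀ i : ℤ, (0:ℚ) < B.a (i + 1) (i + 3) := by
    intro i
    have := hBq (i + 1)
    rwa [show i + 1 + 2 = i + 3 by ring] at this
  have up : ∀ m : ℤ,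
      ((Even m → B.a m (m + 2) * A.a 0 2 = A.a m (m + 2) * B.a 0 2) ∧
       (Odd m → B.a m (m + 2) * B.a 0 2 = A.a m (m + 2) * A.a 0 2)) →
      ((Even (m + 1) → B.a (m + 1) (m + 3) * A.a 0 2 = A.a (m + 1) (m + 3) * B.a 0 2) ∧
       (Odd (m + 1) → B.a (m + 1) (m + 3) * B.a 0 2 = A.a (m + 1) (m + 3) * A.a 0 2)) := by
    intro m ⟨h1, h2⟩
    constructor
    · intro he
      have ho : Odd m := by rcases he with ⟨c, hc⟩; exact ⟨c - 1, by omega⟩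
      exact ratio_step_up A B hs m _ _ (ne_of_gt hB0) (ne_of_gt (hBq m)) (h2 ho)
    · intro ho
      have he : Even m := by rcases ho with ⟨c, hc⟩; exact ⟨c, by omega⟩
      exact ratio_step_up A B hs m _ _ (ne_of_gt hA0) (ne_of_gt (hBq m)) (h1 he)
  have down : ∀ m : ℤ,
      ((Even (m + 1) → B.a (m + 1) (m + 3) * A.a 0 2 = A.a (m + 1) (m + 3) * B.a 0 2) ∧
       (Odd (m + 1) → B.a (m + 1) (m + 3) * B.a 0 2 = A.a (m + 1) (m + 3) * A.a 0 2)) →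
      ((Even m → B.a m (m + 2) * A.a 0 2 = A.a m (m + 2) * B.a 0 2) ∧
       (Odd m → B.a m (m + 2) * B.a 0 2 = A.a m (m + 2) * A.a 0 2)) := by
    intro m ⟨h1, h2⟩
    constructor
    · intro he
      have ho : Odd (m + 1) := by rcases he with ⟨c, hc⟩; exact ⟨c, by omega⟩
      exact ratio_step_down A B hs m _ _ (ne_of_gt hB0) (ne_of_gt (hBq' m)) (h2 ho)
    · intro ho
      have he : Even (m + 1) := by rcases ho with ⟨c, hc⟩; exact ⟨c + 1, by omega⟩
      exact ratio_step_down A B hs m _ _ (ne_of_gt hA0) (ne_of_gt (hBq' m)) (h1 he)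
  intro i
  induction i using Int.induction_on with
  | zero =>
    constructor
    · intro _; norm_num; ring
    · intro h; rcases h with ⟨c, hc⟩; omega
  | succ i ih =>
    rw [show (i:ℤ) + 1 + 2 = (i:ℤ) + 3 by ring]
    exact up (i : ℤ) ih
  | pred i ih =>
    have h := down (-(i:ℤ) - 1)
    rw [show -(i:ℤ) - 1 + 1 = -(i:ℤ) by ring, show -(i:ℤ) - 1 + 3 = -(i:ℤ) + 2 by ring] at h
    exact h ih

end ClosedFrieze

namespace ClosedFrieze
variable {n : ℕ}

lemma quid_eq (A B : ClosedFrieze n) (hA : A.Arithmetic) (hB : B.Arithmetic)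
    (hs : ∀ i : ℤ, A.a i (i + 3) = B.a i (i + 3)) (h0 : A.a 0 2 = B.a 0 2) :
    ∀ i : ℤ, A.a i (i + 2) = B.a i (i + 2) := by
  intro i
  have hA0 : (0:ℚ) < A.a 0 2 := A.pos hA 0 2 (by omega) (by omega)
  rcases Int.even_or_odd i with he | ho
  · have := (ratio A B hA hB hs i).1 he
    rw [← h0] at this
    exact (mul_right_cancel₀ (ne_of_gt hA0) this).symm
  · have := (ratio A B hA hB hs i).2 ho
    rw [← h0] at this
    exact (mul_right_cancel₀ (ne_of_gt hA0) this).symm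

lemma rows_eq (A B : ClosedFrieze n) (hA : A.Arithmetic) (hB : B.Arithmetic)
    (hs : ∀ i : ℤ, A.a i (i + 3) = B.a i (i + 3)) (h0 : A.a 0 2 = B.a 0 2) :
    ∀ k : ℕ, ∀ i j : ℤ, j - i = (k : ℤ) → (k : ℤ) ≤ (n : ℤ) + 2 → A.a i j = B.a i j := by
  intro k
  induction k using Nat.strong_induction_on with
  | _ k ih =>
    intro i j hij hk
    match k, hij, hk with
    | 0, hij, hk =>
      rw [A.outside i j (by left; omega), B.outside i j (by left; omega)]
    | 1, hij, hk =>
      have hj : j = i + 1 := by push_cast at hij; omega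
      rw [hj, A.topOne, B.topOne]
    | 2, hij, hk =>
      have hj : j = i + 2 := by push_cast at hij; omega
      rw [hj]
      exact quid_eq A B hA hB hs h0 i
    | (m + 3), hij, hk =>
      push_cast at hij hk
      have RA := A.recur hA (m + 1) (by push_cast; omega) i (j - 1) (by push_cast; omega)
      have RB := B.recur hB (m + 1) (by push_cast; omega) i (j - 1) (by push_cast; omega)
      rw [show j - 1 + 1 = j by ring, show j - 1 - 1 = j - 2 by ring] at RA RB
      rw [RA, RB]
      rw [ih 2 (by omega) (j - 2) j (by omega) (by omega),
        ih (m + 2) (by omega) i (j - 1) (by push_cast; omega) (by push_cast; omega),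
        ih (m + 1) (by omega) i (j - 2) (by push_cast; omega) (by push_cast; omega)]

lemma ext' {A B : ClosedFrieze n} (h : A.a = B.a) : A = B := by
  cases A; cases B; cases h; rfl

lemma eq_of (A B : ClosedFrieze n) (hA : A.Arithmetic) (hB : B.Arithmetic)
    (hs : ∀ i : ℤ, A.a i (i + 3) = B.a i (i + 3)) (h0 : A.a 0 2 = B.a 0 2) : A = B := by
  apply ext'
  funext i j
  rcases le_or_gt (j - i) 0 with h | h
  · rw [A.outside i j (by left; omega), B.outside i j (by left; omega)]
  rcases le_or_gt ((n : ℤ) + 3) (j - i) with h' | h'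
  · rw [A.outside i j (by right; omega), B.outside i j (by right; omega)]
  · exact rows_eq A B hA hB hs h0 (j - i).toNat i j (by omega) (by omega)

lemma key (A B C : ClosedFrieze n) (hn : 1 ≤ n)
    (hA : A.Arithmetic) (hB : B.Arithmetic) (hC : C.Arithmetic)
    (hsAB : ∀ i : ℤ, A.a i (i + 3) = B.a i (i + 3))
    (hsBC : ∀ i : ℤ, B.a i (i + 3) = C.a i (i + 3))
    (h1 : A.a 0 2 < B.a 0 2) (h2 : B.a 0 2 < C.a 0 2) : False := by
  obtain ⟨i0, hi0⟩ := B.ear hB hn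
  have hA0 : (0:ℚ) < A.a 0 2 := A.pos hA 0 2 (by omega) (by omega)
  have hB0 : (0:ℚ) < B.a 0 2 := B.pos hB 0 2 (by omega) (by omega)
  have hC0 : (0:ℚ) < C.a 0 2 := C.pos hC 0 2 (by omega) (by omega)
  rcases Int.even_or_odd i0 with he | ho
  · have h := (ratio A B hA hB hsAB i0).1 he
    rw [hi0] at h
    have hq : (1:ℚ) ≤ A.a i0 (i0 + 2) := A.one_le hA i0 (i0 + 2) (by omega) (by omega)
    nlinarith
  · have h := (ratio B C hB hC hsBC i0).2 ho
    rw [hi0] at h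
    have hq : (1:ℚ) ≤ C.a i0 (i0 + 2) := C.one_le hC i0 (i0 + 2) (by omega) (by omega)
    nlinarith

end ClosedFrieze

/-- For `n` odd, at most two arithmetic frieze patterns of width `n` share a given
second row: each Y-equivalence class has at most two elements. -/
theorem stmt14 (n : ℕ) (hn : 1 ≤ n) (hodd : Odd n) (s : ℤ → ℚ) :
    {A : ClosedFrieze n | A.Arithmetic ∧ ∀ i : ℤ, A.a i (i + 3) = s i}.ncard ≤ 2 := by
  set S := {A : ClosedFrieze n | A.Arithmetic ∧ ∀ i : ℤ, A.a i (i + 3) = s i} with hS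
  by_contra hcon
  push_neg at hcon
  have hfin : S.Finite := by
    by_contra hinf
    rw [Set.Infinite.ncard hinf] at hcon
    omega
  rw [Set.two_lt_ncard hfin] at hcon
  obtain ⟨A, hAS, B, hBS, C, hCS, hab, hac, hbc⟩ := hcon
  have K : ∀ X Y Z : ClosedFrieze n, X ∈ S → Y ∈ S → Z ∈ S →
      X.a 0 2 < Y.a 0 2 → Y.a 0 2 < Z.a 0 2 → False := by
    intro X Y Z hX hY hZ h1 h2
    exact ClosedFrieze.key X Y Z hn hX.1 hY.1 hZ.1
      (fun i => (hX.2 i).trans (hY.2 i).symm)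
      (fun i => (hY.2 i).trans (hZ.2 i).symm) h1 h2
  have tne : ∀ X Y : ClosedFrieze n, X ∈ S → Y ∈ S → X ≠ Y → X.a 0 2 ≠ Y.a 0 2 := by
    intro X Y hX hY hne h0
    exact hne (ClosedFrieze.eq_of X Y hX.1 hY.1
      (fun i => (hX.2 i).trans (hY.2 i).symm) h0)
  rcases lt_trichotomy (A.a 0 2) (B.a 0 2) with h1 | h1 | h1
  · rcases lt_trichotomy (B.a 0 2) (C.a 0 2) with h2 | h2 | h2
    · exact K A B C hAS hBS hCS h1 h2
    · exact tne B C hBS hCS hbc h2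
    · rcases lt_trichotomy (A.a 0 2) (C.a 0 2) with h3 | h3 | h3
      · exact K A C B hAS hCS hBS h3 h2
      · exact tne A C hAS hCS hac h3
      · exact K C A B hCS hAS hBS h3 h1
  · exact tne A B hAS hBS hab h1
  · rcases lt_trichotomy (A.a 0 2) (C.a 0 2) with h2 | h2 | h2
    · exact K B A C hBS hAS hCS h1 h2
    · exact tne A C hAS hCS hac h2
    · rcases lt_trichotomy (B.a 0 2) (C.a 0 2) with h3 | h3 | h3
      · exact K B C A hBS hCS hAS h3 h2
      · exact tne B C hBS hCS hbc h3
      · exact K C B A hCS hBS hAS h3 h1
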